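/- Let q : ℝ × ℝ → ℂ with q(·, t) integrable on ℝ for each t, and set U(y,t) := [[0, q(y,t)],[q(−y,−t), 0]]. Suppose Ψ : ℝ × ℝ × ℝ → M₂(ℂ) is bounded, continuous and satisfies the Volterra integral equation Ψ(x,t,k) = I + ∫_{−∞}^{x} e^{ik(y−x)σ̂₃}( U(y,t) Ψ(y,t,k) ) dy for all x, t ∈ ℝ and k ∈ ℝ. Then the function Ψ̃(x,t,k) := Λ · Ψ(−x, −t, k) · Λ⁻¹ satisfies the companion Volterra equation Ψ̃(x,t,k) = I − ∫_{x}^{∞} e^{ik(y−x)σ̂₃}( U(y,t) Ψ̃(y,t,k) ) dy for all x, t ∈ ℝ and k ∈ ℝ. (This is the second symmetry used by the paper to derive s₁₂ = s₂₁ in (2.11).) -/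

import Mathlib

open Matrix MeasureTheory Set

noncomputable section

/-- Λ = [[0,-1],[1,0]]. -/
def Lam : Matrix (Fin 2) (Fin 2) ℂ := !![0, -1; 1, 0]

/-- Λ⁻¹ = [[0,1],[-1,0]]. -/
def LamInv : Matrix (Fin 2) (Fin 2) ℂ := !![0, 1; -1, 0]

/-- `e^{θσ̂₃}A = e^{θσ₃} A e^{-θσ₃}`: the (1,2)-entry is multiplied by `e^{2θ}`
and the (2,1)-entry by `e^{-2θ}`. -/
def sigma3Conj (θ : ℂ) (A : Matrix (Fin 2) (Fin 2) ℂ) : Matrix (Fin 2) (Fin 2) ℂ :=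
  !![A 0 0, Complex.exp (2 * θ) * A 0 1; Complex.exp (-(2 * θ)) * A 1 0, A 1 1]

/-- U(y,t). -/
def Umat (q : ℝ → ℝ → ℂ) (y t : ℝ) : Matrix (Fin 2) (Fin 2) ℂ :=
  !![0, q y t; q (-y) (-t), 0]

/-- Ψ̃(x,t,k) = Λ Ψ(-x,-t,k) Λ⁻¹. -/
def PsiTilde (Ψ : ℝ → ℝ → ℝ → Matrix (Fin 2) (Fin 2) ℂ) (x t k : ℝ) :
    Matrix (Fin 2) (Fin 2) ℂ :=
  Lam * Ψ (-x) (-t) k * LamInv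

lemma my_int_neg (f : ℝ → ℂ) (x : ℝ) : ∫ y in Ici x, f y = ∫ y in Iic (-x), f (-y) := by
  rw [integral_comp_neg_Iic, neg_neg, integral_Ici_eq_integral_Ioi]

/-- The second symmetry used to derive s₁₂ = s₂₁ in (2.11): if Ψ solves the
Volterra equation (2.4a) then ΛΨ(-x,-t,k)Λ⁻¹ solves the companion one (2.4b). -/
theorem volterra_second_symmetry (q : ℝ → ℝ → ℂ)
    (hint : ∀ t : ℝ, Integrable (fun y => q y t))
    (Ψ : ℝ → ℝ → ℝ → Matrix (Fin 2) (Fin 2) ℂ)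
    (hbdd : ∃ M : ℝ, ∀ (x t k : ℝ) (i j : Fin 2), ‖Ψ x t k i j‖ ≤ M)
    (hcont : ∀ i j : Fin 2, Continuous fun p : ℝ × ℝ × ℝ => Ψ p.1 p.2.1 p.2.2 i j)
    (hvolt : ∀ (x t k : ℝ) (i j : Fin 2),
      Ψ x t k i j = (1 : Matrix (Fin 2) (Fin 2) ℂ) i j +
        ∫ y in Iic x, (sigma3Conj (Complex.I * (k : ℂ) * ((y : ℂ) - (x : ℂ)))
          (Umat q y t * Ψ y t k)) i j) :
    ∀ (x t k : ℝ) (i j : Fin 2),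
      PsiTilde Ψ x t k i j = (1 : Matrix (Fin 2) (Fin 2) ℂ) i j -
        ∫ y in Ici x, (sigma3Conj (Complex.I * (k : ℂ) * ((y : ℂ) - (x : ℂ)))
          (Umat q y t * PsiTilde Ψ y t k)) i j := by
  intro x t k i j
  have e00 : ∀ z s m, PsiTilde Ψ z s m 0 0 = Ψ (-z) (-s) m 1 1 := by
    intro z s m
    simp [PsiTilde, Lam, LamInv, Matrix.mul_apply, Fin.sum_univ_two, Matrix.vecMul,
      dotProduct]
  have e01 : ∀ z s m, PsiTilde Ψ z s m 0 1 = -Ψ (-z) (-s) m 1 0 := by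
    intro z s m
    simp [PsiTilde, Lam, LamInv, Matrix.mul_apply, Fin.sum_univ_two, Matrix.vecMul,
      dotProduct]
  have e10 : ∀ z s m, PsiTilde Ψ z s m 1 0 = -Ψ (-z) (-s) m 0 1 := by
    intro z s m
    simp [PsiTilde, Lam, LamInv, Matrix.mul_apply, Fin.sum_univ_two, Matrix.vecMul,
      dotProduct]
  have e11 : ∀ z s m, PsiTilde Ψ z s m 1 1 = Ψ (-z) (-s) m 0 0 := by
    intro z s m
    simp [PsiTilde, Lam, LamInv, Matrix.mul_apply, Fin.sum_univ_two, Matrix.vecMul,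
      dotProduct]
  fin_cases i <;> fin_cases j
  · -- (0,0)
    show PsiTilde Ψ x t k 0 0 = (1 : Matrix (Fin 2) (Fin 2) ℂ) 0 0 -
        ∫ y in Ici x, (sigma3Conj (Complex.I * (k : ℂ) * ((y : ℂ) - (x : ℂ)))
          (Umat q y t * PsiTilde Ψ y t k)) 0 0
    rw [e00, hvolt (-x) (-t) k 1 1,
      my_int_neg (fun y : ℝ => (sigma3Conj (Complex.I * (k : ℂ) * ((y : ℂ) - (x : ℂ)))
          (Umat q y t * PsiTilde Ψ y t k)) 0 0) x,
      setIntegral_congr_fun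
        (f := fun y : ℝ => (sigma3Conj (Complex.I * (k : ℂ) * ((((-y : ℝ)) : ℂ) - (x : ℂ)))
          (Umat q (-y) t * PsiTilde Ψ (-y) t k)) 0 0)
        (g := fun y : ℝ =>
        -((sigma3Conj (Complex.I * (k : ℂ) * ((y : ℂ) - ((-x : ℝ) : ℂ)))
          (Umat q y (-t) * Ψ y (-t) k)) 1 1)) measurableSet_Iic ?_, integral_neg]
    · simp
    · intro y _
      simp [sigma3Conj, Umat, Matrix.mul_apply, Fin.sum_univ_two, e10, e01, e00, e11]
      try exact Or.inl (congrArg Complex.exp (by ring))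
  · -- (0,1)
    show PsiTilde Ψ x t k 0 1 = (1 : Matrix (Fin 2) (Fin 2) ℂ) 0 1 -
        ∫ y in Ici x, (sigma3Conj (Complex.I * (k : ℂ) * ((y : ℂ) - (x : ℂ)))
          (Umat q y t * PsiTilde Ψ y t k)) 0 1
    rw [e01, hvolt (-x) (-t) k 1 0,
      my_int_neg (fun y : ℝ => (sigma3Conj (Complex.I * (k : ℂ) * ((y : ℂ) - (x : ℂ)))
          (Umat q y t * PsiTilde Ψ y t k)) 0 1) x,
      setIntegral_congr_fun
        (f := fun y : ℝ => (sigma3Conj (Complex.I * (k : ℂ) * ((((-y : ℝ)) : ℂ) - (x : ℂ)))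
          (Umat q (-y) t * PsiTilde Ψ (-y) t k)) 0 1)
        (g := fun y : ℝ =>
        ((sigma3Conj (Complex.I * (k : ℂ) * ((y : ℂ) - ((-x : ℝ) : ℂ)))
          (Umat q y (-t) * Ψ y (-t) k)) 1 0)) measurableSet_Iic ?_]
    · simp
    · intro y _
      simp [sigma3Conj, Umat, Matrix.mul_apply, Fin.sum_univ_two, e10, e01, e00, e11]
      try exact Or.inl (congrArg Complex.exp (by ring))
  · -- (1,0)
    show PsiTilde Ψ x t k 1 0 = (1 : Matrix (Fin 2) (Fin 2) ℂ) 1 0 -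
        ∫ y in Ici x, (sigma3Conj (Complex.I * (k : ℂ) * ((y : ℂ) - (x : ℂ)))
          (Umat q y t * PsiTilde Ψ y t k)) 1 0
    rw [e10, hvolt (-x) (-t) k 0 1,
      my_int_neg (fun y : ℝ => (sigma3Conj (Complex.I * (k : ℂ) * ((y : ℂ) - (x : ℂ)))
          (Umat q y t * PsiTilde Ψ y t k)) 1 0) x,
      setIntegral_congr_fun
        (f := fun y : ℝ => (sigma3Conj (Complex.I * (k : ℂ) * ((((-y : ℝ)) : ℂ) - (x : ℂ)))
          (Umat q (-y) t * PsiTilde Ψ (-y) t k)) 1 0)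
        (g := fun y : ℝ =>
        ((sigma3Conj (Complex.I * (k : ℂ) * ((y : ℂ) - ((-x : ℝ) : ℂ)))
          (Umat q y (-t) * Ψ y (-t) k)) 0 1)) measurableSet_Iic ?_]
    · simp
    · intro y _
      simp [sigma3Conj, Umat, Matrix.mul_apply, Fin.sum_univ_two, e10, e01, e00, e11]
      try exact Or.inl (congrArg Complex.exp (by ring))
  · -- (1,1)
    show PsiTilde Ψ x t k 1 1 = (1 : Matrix (Fin 2) (Fin 2) ℂ) 1 1 -
        ∫ y in Ici x, (sigma3Conj (Complex.I * (k : ℂ) * ((y : ℂ) - (x : ℂ)))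
          (Umat q y t * PsiTilde Ψ y t k)) 1 1
    rw [e11, hvolt (-x) (-t) k 0 0,
      my_int_neg (fun y : ℝ => (sigma3Conj (Complex.I * (k : ℂ) * ((y : ℂ) - (x : ℂ)))
          (Umat q y t * PsiTilde Ψ y t k)) 1 1) x,
      setIntegral_congr_fun
        (f := fun y : ℝ => (sigma3Conj (Complex.I * (k : ℂ) * ((((-y : ℝ)) : ℂ) - (x : ℂ)))
          (Umat q (-y) t * PsiTilde Ψ (-y) t k)) 1 1)
        (g := fun y : ℝ =>
        -((sigma3Conj (Complex.I * (k : ℂ) * ((y : ℂ) - ((-x : ℝ) : ℂ)))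
          (Umat q y (-t) * Ψ y (-t) k)) 0 0)) measurableSet_Iic ?_, integral_neg]
    · simp
    · intro y _
      simp [sigma3Conj, Umat, Matrix.mul_apply, Fin.sum_univ_two, e10, e01, e00, e11]
      try exact Or.inl (congrArg Complex.exp (by ring))
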